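/- Let (p1,p2,p3) be a Markov triple whose entries are pairwise coprime and none divisible by 3 (both hold automatically for Markov triples), let q1 be an integer with p3*q1 ≡ 3*p2 (mod p1), and set p3' = 3*p1*p3 - p2. Then: (a) p3' > 0 and p1 divides p3'*q1 - 3*p3; (b) gcd(p3', (p3'*q1 - 3*p3)/p1) = 1, i.e. u := (p3', (p3'*q1 - 3*p3)/p1) is a primitive integer vector in Z^2; (c) in Q^2 one has ((p3/(p1*p2))*p1^2, (p3/(p1*p2))*(p1*q1 - 1)) - (0, p3/(p1*p3')) = (p1*p3/(p2*p3'))*u, so the girdle of the triangle A_{p1,q1}(p3/(p1*p2), p3/(p1*p3')) — the segment joining the vertices ((p3/(p1*p2))*p1^2, (p3/(p1*p2))*(p1*q1-1)) and (0, p3/(p1*p3')) — has integral affine length p1*p3/(p2*p3'); (d) the determinant of the 2×2 matrix with columns u and (0, p3/(p1*p3')) equals p3/p1, i.e. the integral affine displacement between the girdle and the vertex at the origin is p3/p1. -/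

import Mathlib

/-- A Markov triple: positive integers satisfying the Markov equation. -/
def IsMarkovTriple (p1 p2 p3 : ℤ) : Prop :=
  0 < p1 ∧ 0 < p2 ∧ 0 < p3 ∧ p1 ^ 2 + p2 ^ 2 + p3 ^ 2 = 3 * p1 * p2 * p3

/-- Lemma on the girdle of `A_{p1,q1}(p3/(p1*p2), p3/(p1*p3'))`, where
`p3' = 3*p1*p3 - p2` is the mutation of the triple at `p2`:
(a) `p3' > 0` and `p1 ∣ p3'*q1 - 3*p3`;
(b) `u = (p3', (p3'*q1 - 3*p3)/p1)` is a primitive integer vector;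
(c) the difference of the endpoints of the girdle equals `(p1*p3/(p2*p3')) • u`,
    i.e. the girdle has integral affine length `p1*p3/(p2*p3')`;
(d) the determinant of the matrix with columns `u` and `(0, p3/(p1*p3'))` equals
    `p3/p1`, the integral affine displacement between the girdle and the origin. -/
theorem girdle_affine_length (p1 p2 p3 q1 : ℤ) (h : IsMarkovTriple p1 p2 p3)
    (hc12 : Int.gcd p1 p2 = 1) (hc13 : Int.gcd p1 p3 = 1) (hc23 : Int.gcd p2 p3 = 1)
    (h31 : ¬ (3 ∣ p1)) (h32 : ¬ (3 ∣ p2)) (h33 : ¬ (3 ∣ p3))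
    (hq : p3 * q1 ≡ 3 * p2 [ZMOD p1]) :
    -- (a)
    (0 < 3 * p1 * p3 - p2 ∧ p1 ∣ (3 * p1 * p3 - p2) * q1 - 3 * p3) ∧
    -- (b)
    Int.gcd (3 * p1 * p3 - p2) (((3 * p1 * p3 - p2) * q1 - 3 * p3) / p1) = 1 ∧
    -- (c): componentwise, the endpoint difference of the girdle is
    -- (p1*p3/(p2*p3')) times the primitive vector u
    (((p3 : ℚ) / ((p1 : ℚ) * (p2 : ℚ))) * (p1 : ℚ) ^ 2 - 0 =
        ((p1 : ℚ) * (p3 : ℚ) / ((p2 : ℚ) * ((3 * p1 * p3 - p2 : ℤ) : ℚ))) *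
          ((3 * p1 * p3 - p2 : ℤ) : ℚ) ∧
      ((p3 : ℚ) / ((p1 : ℚ) * (p2 : ℚ))) * ((p1 : ℚ) * (q1 : ℚ) - 1) -
          (p3 : ℚ) / ((p1 : ℚ) * ((3 * p1 * p3 - p2 : ℤ) : ℚ)) =
        ((p1 : ℚ) * (p3 : ℚ) / ((p2 : ℚ) * ((3 * p1 * p3 - p2 : ℤ) : ℚ))) *
          (((((3 * p1 * p3 - p2) * q1 - 3 * p3) / p1 : ℤ)) : ℚ)) ∧
    -- (d)
    ((3 * p1 * p3 - p2 : ℤ) : ℚ) * ((p3 : ℚ) / ((p1 : ℚ) * ((3 * p1 * p3 - p2 : ℤ) : ℚ))) -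
        (((((3 * p1 * p3 - p2) * q1 - 3 * p3) / p1 : ℤ)) : ℚ) * 0 =
      (p3 : ℚ) / (p1 : ℚ) := by
  obtain ⟨hp1, hp2, hp3, hM⟩ := h
  set p3' := 3 * p1 * p3 - p2 with hp3'def
  have hp1Q : (p1:ℚ) ≠ 0 := Int.cast_ne_zero.mpr hp1.ne'
  have hp2Q : (p2:ℚ) ≠ 0 := Int.cast_ne_zero.mpr hp2.ne'
  -- (a) positivity
  have ha1 : 0 < p3' := by
    have h1 : p2 * p2 < p2 * (3 * p1 * p3) := by nlinarith [sq_nonneg p1, sq_nonneg p3]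
    have := lt_of_mul_lt_mul_left h1 hp2.le
    omega
  have hp3'Q : ((p3' : ℤ) : ℚ) ≠ 0 := Int.cast_ne_zero.mpr ha1.ne'
  -- divisibility
  have hd1 : p1 ∣ 3 * p2 - p3 * q1 := hq.dvd
  have hcop12 : IsCoprime p1 p2 := Int.isCoprime_iff_gcd_eq_one.mpr hc12
  have hd2 : p1 ∣ p2 * (p2 * q1 + 3 * p3) := by
    obtain ⟨c, hc⟩ := hd1
    exact ⟨3 * p2 * p3 * q1 - p1 * q1 + p3 * c, by linear_combination q1 * hM + p3 * hc⟩
  have hd3 : p1 ∣ p2 * q1 + 3 * p3 := hcop12.dvd_of_dvd_mul_left hd2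
  have ha2 : p1 ∣ p3' * q1 - 3 * p3 := by
    obtain ⟨c, hc⟩ := hd3
    exact ⟨3 * p3 * q1 - c, by linear_combination -hc⟩
  -- k and its defining equation
  obtain ⟨k, hk⟩ := ha2
  have hkdiv : (p3' * q1 - 3 * p3) / p1 = k := by
    rw [hk]; exact Int.mul_ediv_cancel_left k hp1.ne'
  -- (b)
  have hcop3 : IsCoprime p2 (3:ℤ) := by
    rw [Int.isCoprime_iff_gcd_eq_one]
    have h1 : Int.gcd p2 3 ∣ 3 := by
      have := @Int.gcd_dvd_right p2 3
      exact_mod_cast this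
    rcases (Nat.prime_three).eq_one_or_self_of_dvd _ h1 with h1 | h1
    · exact h1
    · exfalso
      apply h32
      have := @Int.gcd_dvd_left p2 3
      rw [h1] at this
      exact_mod_cast this
  have hcop23 : IsCoprime p2 p3 := Int.isCoprime_iff_gcd_eq_one.mpr hc23
  have hcop : IsCoprime p2 (3 * p3) := hcop3.mul_right hcop23
  have hb : Int.gcd p3' ((p3' * q1 - 3 * p3) / p1) = 1 := by
    rw [hkdiv]
    set g : ℕ := Int.gcd p3' k with hg
    have hg1 : (g:ℤ) ∣ p3' := Int.gcd_dvd_left _ _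
    have hg2 : (g:ℤ) ∣ k := Int.gcd_dvd_right _ _
    have hg3 : (g:ℤ) ∣ 3 * p3 := by
      have : 3 * p3 = p3' * q1 - p1 * k := by linear_combination -hk
      rw [this]; exact dvd_sub (hg1.mul_right q1) (hg2.mul_left p1)
    have hg4 : (g:ℤ) ∣ p2 := by
      have : p2 = p1 * (3 * p3) - p3' := by rw [hp3'def]; ring
      rw [this]; exact dvd_sub (hg3.mul_left p1) hg1
    have := hcop.isUnit_of_dvd' hg4 hg3
    rcases Int.isUnit_iff.mp this with h1 | h1
    · exact_mod_cast h1
    · omega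
  refine ⟨⟨ha1, ⟨k, hk⟩⟩, hb, ⟨?_, ?_⟩, ?_⟩
  · field_simp
    ring
  · rw [hkdiv]
    have hkQ : (p1:ℚ) * (k:ℚ) = ((p3':ℤ):ℚ) * (q1:ℚ) - 3 * (p3:ℚ) := by
      exact_mod_cast hk.symm
    have hQ : ((p3':ℤ):ℚ) = 3 * (p1:ℚ) * (p3:ℚ) - (p2:ℚ) := by
      push_cast [hp3'def]; ring
    have hkQ' : (k:ℚ) = (((p3':ℤ):ℚ) * (q1:ℚ) - 3 * (p3:ℚ)) / (p1:ℚ) := by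
      rw [eq_div_iff hp1Q]; linear_combination hkQ
    have hne : 3 * (p1:ℚ) * (p3:ℚ) - (p2:ℚ) ≠ 0 := hQ ▸ hp3'Q
    rw [hkQ', hQ]
    have hne' : (p3:ℚ) * (p1:ℚ) * 3 - (p2:ℚ) ≠ 0 := by contrapose! hne; linarith
    field_simp
    ring
  · rw [hkdiv]
    field_simp
    ring
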